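/- For 0 < q < 1, p > -1, 0 < α < 1, x > 0, and f such that all integrals converge, the generalized q-fractional derivative is a left inverse of the generalized q-fractional integral: D^α_{p,q}(J^α_{p,q} f)(x) = f(x), where D^α_{p,q} g(x) = (x^{-p} D_q)(J^{1-α}_{p,q} g)(x). -/

import Mathlib

open scoped BigOperators

/-- Jackson q-integral ∫₀^b f d_q = (1-q) b ∑ q^i f(q^i b). -/
noncomputable def jackson (q b : ℝ) (f : ℝ → ℝ) : ℝ :=
  (1 - q) * b * ∑' i : ℕ, q ^ i * f (q ^ i * b)

/-- Jackson q-integral ∫_a^b. -/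
noncomputable def jacksonI (q a b : ℝ) (f : ℝ → ℝ) : ℝ :=
  jackson q b f - jackson q a f

/-- q-number [a]_q = (1-q^a)/(1-q). -/
noncomputable def qNum (q a : ℝ) : ℝ := (1 - q ^ a) / (1 - q)

/-- infinite q-Pochhammer (a;q)_∞. -/
noncomputable def qPochInf (a q : ℝ) : ℝ := ∏' j : ℕ, (1 - a * q ^ j)

/-- q-Gamma function Γ_q(t) = ((q;q)_∞/(q^t;q)_∞)(1-q)^{1-t}. -/
noncomputable def qGamma (q t : ℝ) : ℝ :=
  (qPochInf q q / qPochInf (q ^ t) q) * (1 - q) ^ (1 - t)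

/-- q-exponential E_q(z) = ∏ (1 + (1-q) q^k z). -/
noncomputable def qExpE (q z : ℝ) : ℝ := ∏' k : ℕ, (1 + (1 - q) * q ^ k * z)

/-- generalized Q-power (x - y)^{(γ)}_Q = x^γ (y/x;Q)_∞ / (Q^γ y/x;Q)_∞. -/
noncomputable def genPow (Q x y γ : ℝ) : ℝ :=
  x ^ γ * (qPochInf (y / x) Q / qPochInf (Q ^ γ * (y / x)) Q)

/-- q-derivative D_q h(x) = (h(x)-h(qx))/((1-q)x). -/
noncomputable def qDeriv (q : ℝ) (h : ℝ → ℝ) (x : ℝ) : ℝ :=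
  (h x - h (q * x)) / ((1 - q) * x)

/-- generalized q-fractional integral J^α_{p,q}. -/
noncomputable def Jfrac (q p α : ℝ) (f : ℝ → ℝ) (x : ℝ) : ℝ :=
  ((qNum q (p + 1)) ^ (1 - α) / qGamma (q ^ (p + 1)) α) *
    jackson q x (fun w => w ^ p * f w *
      genPow (q ^ (p + 1)) (x ^ (p + 1)) ((w * q) ^ (p + 1)) (α - 1))

/-- generalized q-fractional derivative for 0 < α < 1 : D^α g = (x^{-p} D_q)(J^{1-α} g). -/
noncomputable def Dfrac (q p α : ℝ) (g : ℝ → ℝ) (x : ℝ) : ℝ :=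
  x ^ (-p) * qDeriv q (fun y => Jfrac q p (1 - α) g y) x

set_option maxHeartbeats 1600000

section pochAux
variable {Q a : ℝ}

lemma factor_pos (hQ0 : 0 < Q) (hQ1 : Q < 1) (ha0 : 0 ≤ a) (ha1 : a < 1) (j : ℕ) :
    0 < 1 - a * Q ^ j := by
  have h1 : Q ^ j ≤ 1 := pow_le_one₀ hQ0.le hQ1.le
  have h2 : a * Q ^ j ≤ a * 1 := by
    apply mul_le_mul_of_nonneg_left h1 ha0
  nlinarith

lemma summable_log_fac (hQ0 : 0 < Q) (hQ1 : Q < 1) (ha0 : 0 ≤ a) (ha1 : a < 1) :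
    Summable fun j : ℕ => Real.log (1 - a * Q ^ j) := by
  rw [← summable_abs_iff]
  refine Summable.of_nonneg_of_le
    (fun j => abs_nonneg _) ?_ ((summable_geometric_of_lt_one hQ0.le hQ1).mul_left (a/(1-a)))
  · intro j
    have hpos := factor_pos hQ0 hQ1 ha0 ha1 j
    have hle : a * Q ^ j ≤ a := by
      have h1 : Q ^ j ≤ 1 := pow_le_one₀ hQ0.le hQ1.le
      nlinarith
    have hlog_le : Real.log (1 - a * Q ^ j) ≤ 0 := by
      apply Real.log_nonpos <;> nlinarith [mul_nonneg ha0 (pow_nonneg hQ0.le j)]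
    rw [abs_of_nonpos hlog_le]
    have h2 : Real.log ((1 - a * Q ^ j)⁻¹) ≤ (1 - a * Q ^ j)⁻¹ - 1 :=
      Real.log_le_sub_one_of_pos (by positivity)
    rw [Real.log_inv] at h2
    have h3 : (1 - a * Q ^ j)⁻¹ - 1 = (a * Q ^ j) / (1 - a * Q ^ j) := by
      field_simp
      ring
    rw [h3] at h2
    have h4 : (a * Q ^ j) / (1 - a * Q ^ j) ≤ (a * Q ^ j) / (1 - a) := by
      gcongr <;>
        nlinarith [mul_nonneg ha0 (pow_nonneg hQ0.le j), pow_le_one₀ hQ0.le hQ1.le (n := j)]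
    calc -Real.log (1 - a * Q ^ j) ≤ (a * Q ^ j) / (1 - a * Q ^ j) := by linarith
      _ ≤ (a * Q ^ j) / (1 - a) := h4
      _ = (a / (1 - a)) * Q ^ j := by ring

lemma qPochInf_eq_exp (hQ0 : 0 < Q) (hQ1 : Q < 1) (ha0 : 0 ≤ a) (ha1 : a < 1) :
    qPochInf a Q = Real.exp (∑' j : ℕ, Real.log (1 - a * Q ^ j)) := by
  have := Real.rexp_tsum_eq_tprod (f := fun (j : ℕ) => 1 - a * Q ^ j)
    (fun j => factor_pos hQ0 hQ1 ha0 ha1 j)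
    (summable_log_fac hQ0 hQ1 ha0 ha1)
  exact this.symm

lemma qPochInf_pos (hQ0 : 0 < Q) (hQ1 : Q < 1) (ha0 : 0 ≤ a) (ha1 : a < 1) :
    0 < qPochInf a Q := by
  rw [qPochInf_eq_exp hQ0 hQ1 ha0 ha1]; exact Real.exp_pos _

lemma qPochInf_le_one (hQ0 : 0 < Q) (hQ1 : Q < 1) (ha0 : 0 ≤ a) (ha1 : a < 1) :
    qPochInf a Q ≤ 1 := by
  rw [qPochInf_eq_exp hQ0 hQ1 ha0 ha1]
  rw [Real.exp_le_one_iff]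
  apply tsum_nonpos
  intro j
  apply Real.log_nonpos
  · have := factor_pos hQ0 hQ1 ha0 ha1 j; linarith
  · nlinarith [mul_nonneg ha0 (pow_nonneg hQ0.le j)]

lemma qPochInf_shift (hQ0 : 0 < Q) (hQ1 : Q < 1) (ha0 : 0 ≤ a) (ha1 : a < 1) :
    qPochInf a Q = (1 - a) * qPochInf (a * Q) Q := by
  have haQ0 : 0 ≤ a * Q := by positivity
  have haQ1 : a * Q < 1 := by nlinarith
  rw [qPochInf_eq_exp hQ0 hQ1 ha0 ha1, qPochInf_eq_exp hQ0 hQ1 haQ0 haQ1]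
  rw [Summable.tsum_eq_zero_add (summable_log_fac hQ0 hQ1 ha0 ha1)]
  rw [Real.exp_add]
  congr 1
  · simp [Real.exp_log (by linarith : (0:ℝ) < 1 - a)]
  · congr 1
    apply tsum_congr
    intro j
    congr 2
    ring

lemma qPochInf_finshift (hQ0 : 0 < Q) (hQ1 : Q < 1) (ha0 : 0 ≤ a) (ha1 : a < 1) (m : ℕ) :
    qPochInf a Q = (∏ k ∈ Finset.range m, (1 - a * Q ^ k)) * qPochInf (a * Q ^ m) Q := by
  induction m with
  | zero => simp
  | succ m ih =>
    have haQ0 : 0 ≤ a * Q ^ m := by positivity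
    have haQ1 : a * Q ^ m < 1 := by
      have h1 : Q ^ m ≤ 1 := pow_le_one₀ hQ0.le hQ1.le
      nlinarith
    rw [ih, Finset.prod_range_succ, qPochInf_shift hQ0 hQ1 haQ0 haQ1]
    rw [show a * Q ^ m * Q = a * Q ^ (m+1) by ring]
    ring

end pochAux

noncomputable def qRat (Q s : ℝ) (m : ℕ) : ℝ :=
  ∏ k ∈ Finset.range m, ((1 - s * Q ^ k) / (1 - Q ^ (k + 1)))

lemma qRat_succ (Q s : ℝ) (m : ℕ) :
    qRat Q s (m + 1) = qRat Q s m * ((1 - s * Q ^ m) / (1 - Q ^ (m + 1))) :=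
  Finset.prod_range_succ _ _

lemma one_sub_pow_ne (Q : ℝ) (hQ0 : 0 < Q) (hQ1 : Q < 1) (k : ℕ) :
    1 - Q ^ (k + 1) ≠ 0 := by
  have : Q ^ (k + 1) < 1 := pow_lt_one₀ hQ0.le hQ1 (Nat.succ_ne_zero k)
  linarith

lemma vand_step (Q s : ℝ) (hQ0 : 0 < Q) (hQ1 : Q < 1) (hs : s ≠ 0) (j m : ℕ) :
    s ^ j * qRat Q (Q / s) j * qRat Q s (m + 1)
      = s ^ j * qRat Q (Q / s) j * qRat Q s m
        + ((-(s ^ (j+1) * qRat Q (Q / s) (j+1) * qRat Q s m * Q ^ m * (1 - Q ^ (j+1))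
              / (1 - Q ^ (j + m + 1))))
           - (-(s ^ j * qRat Q (Q / s) j * qRat Q s (m+1) * Q ^ (m+1) * (1 - Q ^ j)
              / (1 - Q ^ (j + m + 1))))) := by
  rw [qRat_succ Q s m, qRat_succ Q (Q/s) j]
  have h1 := one_sub_pow_ne Q hQ0 hQ1 m
  have h2 := one_sub_pow_ne Q hQ0 hQ1 j
  have h3 := one_sub_pow_ne Q hQ0 hQ1 (j + m)
  field_simp
  ring

lemma vand (Q s : ℝ) (hQ0 : 0 < Q) (hQ1 : Q < 1) (hs : s ≠ 0) (n : ℕ) :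
    ∑ j ∈ Finset.range (n + 1), s ^ j * qRat Q (Q / s) j * qRat Q s (n - j) = 1 := by
  induction n with
  | zero => simp [qRat]
  | succ n ih =>
    set t := Q / s with ht
    have key : ∀ j ∈ Finset.range (n + 1),
        s ^ j * qRat Q t j * qRat Q s (n + 1 - j)
          = s ^ j * qRat Q t j * qRat Q s (n - j)
            + ((-(s ^ (j+1) * qRat Q t (j+1) * qRat Q s (n + 1 - (j+1)) * Q ^ (n + 1 - (j+1))
                  * (1 - Q ^ (j+1)) / (1 - Q ^ (n + 1))))
               - (-(s ^ j * qRat Q t j * qRat Q s (n + 1 - j) * Q ^ (n + 1 - j)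
                  * (1 - Q ^ j) / (1 - Q ^ (n + 1))))) := by
      intro j hj
      rw [Finset.mem_range] at hj
      have hjn : j ≤ n := Nat.lt_succ_iff.mp hj
      obtain ⟨m, hm⟩ : ∃ m, n = j + m := ⟨n - j, by omega⟩
      subst hm
      have e1 : j + m + 1 - j = m + 1 := by omega
      have e2 : j + m - j = m := by omega
      have e3 : j + m + 1 - (j + 1) = m := by omega
      rw [e1, e2, e3]
      exact vand_step Q s hQ0 hQ1 hs j m
    rw [Finset.sum_range_succ, Finset.sum_congr rfl key, Finset.sum_add_distrib,
      Finset.sum_range_sub (fun j => -(s ^ j * qRat Q t j * qRat Q s (n + 1 - j)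
        * Q ^ (n + 1 - j) * (1 - Q ^ j) / (1 - Q ^ (n + 1)))), ih]
    have h4 := one_sub_pow_ne Q hQ0 hQ1 n
    have e4 : n + 1 - (n + 1) = 0 := by omega
    rw [e4]
    simp only [Nat.sub_zero, pow_zero, sub_self, zero_div, neg_zero, sub_zero, mul_zero,
      zero_mul, mul_one]
    rw [show qRat Q s 0 = 1 from rfl]
    field_simp
    ring

lemma pow_rpow_comm (q c : ℝ) (hq : 0 < q) (n : ℕ) : ((q : ℝ) ^ n) ^ c = (q ^ c) ^ n := by
  rw [← Real.rpow_natCast q n, ← Real.rpow_mul hq.le, mul_comm, Real.rpow_mul hq.le,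
    Real.rpow_natCast]

lemma genPow_eval (Q X r γ : ℝ) (hX : X ≠ 0) :
    genPow Q X (r * X) γ = X ^ γ * (qPochInf r Q / qPochInf (Q ^ γ * r) Q) := by
  unfold genPow
  rw [mul_div_assoc, div_self hX, mul_one]

section closed
variable {q p β y : ℝ}

lemma Jfrac_closed (f : ℝ → ℝ)
    (hq0 : 0 < q) (hq1 : q < 1) (hp : -1 < p) (hy : 0 < y) (hβ0 : 0 < β) (hβ1 : β < 1) :
    Jfrac q p β f y
      = ((1 - q) ^ β * qPochInf ((q ^ (p+1)) ^ β) (q ^ (p+1)) / qPochInf (q ^ (p+1)) (q ^ (p+1)))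
        * y ^ ((p + 1) * β)
        * ∑' i : ℕ, ((q ^ (p+1)) ^ i
            * (qPochInf ((q ^ (p+1)) * (q ^ (p+1)) ^ i) (q ^ (p+1))
               / qPochInf ((q ^ (p+1)) ^ β * (q ^ (p+1)) ^ i) (q ^ (p+1))))
            * f (q ^ i * y) := by
  set Q : ℝ := q ^ (p + 1) with hQ
  have hp1 : (0:ℝ) < p + 1 := by linarith
  have hQ0 : 0 < Q := Real.rpow_pos_of_pos hq0 _
  have hQ1 : Q < 1 := Real.rpow_lt_one hq0.le hq1 hp1
  have hq1' : (0:ℝ) < 1 - q := by linarith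
  have hQ1' : (0:ℝ) < 1 - Q := by linarith
  -- termwise identity
  have hterm : ∀ i : ℕ,
      q ^ i * ((q ^ i * y) ^ p * f (q ^ i * y)
        * genPow Q (y ^ (p+1)) ((q ^ i * y * q) ^ (p+1)) (β - 1))
      = (y ^ p * (y ^ (p+1)) ^ (β - 1))
        * ((Q ^ i * (qPochInf (Q * Q ^ i) Q / qPochInf (Q ^ β * Q ^ i) Q)) * f (q ^ i * y)) := by
    intro i
    have hqi : (0:ℝ) < q ^ i := pow_pos hq0 i
    have hyp : (0:ℝ) < y ^ (p+1) := Real.rpow_pos_of_pos hy _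
    -- (q^i*y)^p = (q^i)^p * y^p
    have e1 : (q ^ i * y) ^ p = (q ^ i) ^ p * y ^ p := Real.mul_rpow hqi.le hy.le
    -- (q^i*y*q)^(p+1) = (Q*Q^i) * y^(p+1)
    have e2 : (q ^ i * y * q) ^ (p+1) = (Q * Q ^ i) * y ^ (p+1) := by
      have : q ^ i * y * q = q ^ (i+1) * y := by ring
      rw [this, Real.mul_rpow (pow_pos hq0 (i+1)).le hy.le]
      congr 1
      rw [pow_rpow_comm q (p+1) hq0 (i+1), ← hQ, pow_succ']
    rw [e1, e2, genPow_eval Q (y ^ (p+1)) (Q * Q ^ i) (β - 1) hyp.ne']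
    -- Q^(β-1) * (Q * Q^i) = Q^β * Q^i
    have e3 : Q ^ (β - 1) * (Q * Q ^ i) = Q ^ β * Q ^ i := by
      rw [Real.rpow_sub hQ0, Real.rpow_one]
      field_simp
    rw [e3]
    -- q^i * (q^i)^p = Q^i
    have e4 : q ^ i * (q ^ i) ^ p = Q ^ i := by
      rw [pow_rpow_comm q p hq0 i, ← mul_pow, hQ]
      congr 1
      nth_rewrite 1 [← Real.rpow_one q]
      rw [← Real.rpow_add hq0]
      ring_nf
    calc q ^ i * ((q ^ i) ^ p * y ^ p * f (q ^ i * y)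
          * ((y ^ (p+1)) ^ (β-1) * (qPochInf (Q * Q ^ i) Q / qPochInf (Q ^ β * Q ^ i) Q)))
        = (q ^ i * (q ^ i) ^ p) * (y ^ p * (y ^ (p+1)) ^ (β - 1))
          * ((qPochInf (Q * Q ^ i) Q / qPochInf (Q ^ β * Q ^ i) Q) * f (q ^ i * y)) := by ring
      _ = _ := by rw [e4]; ring
  unfold Jfrac jackson
  rw [tsum_congr hterm, tsum_mul_left]
  -- constant manipulation
  have hβQ : Q ^ β < 1 := Real.rpow_lt_one hQ0.le hQ1 hβ0
  have hβQ0 : 0 < Q ^ β := Real.rpow_pos_of_pos hQ0 _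
  have hP : 0 < qPochInf Q Q := qPochInf_pos hQ0 hQ1 hQ0.le hQ1
  have hB : 0 < qPochInf (Q ^ β) Q := qPochInf_pos hQ0 hQ1 hβQ0.le hβQ
  have hvpos : (0:ℝ) < (1 - Q) ^ (1 - β) := Real.rpow_pos_of_pos hQ1' _
  have hy1 : y * y ^ p * y ^ ((p+1) * (β-1)) = y ^ ((p + 1) * β) := by
    nth_rewrite 1 [← Real.rpow_one y]
    rw [← Real.rpow_add hy, ← Real.rpow_add hy]
    congr 1
    ring
  have hA : ((1 - Q) / (1 - q)) ^ (1 - β) = (1 - Q) ^ (1-β) * ((1 - q) ^ β / (1-q)) := by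
    rw [Real.div_rpow hQ1'.le hq1'.le, show (1:ℝ) - β = -(β - 1) by ring,
      Real.rpow_neg hq1'.le (β-1), Real.rpow_sub hq1', Real.rpow_one]
    field_simp
  have key : qNum q (p + 1) ^ (1 - β) / qGamma (q ^ (p+1)) β * ((1 - q) * y
        * (y ^ p * (y ^ (p+1)) ^ (β - 1)))
      = (1 - q) ^ β * qPochInf (Q ^ β) Q / qPochInf Q Q * y ^ ((p + 1) * β) := by
    unfold qNum qGamma
    rw [← hQ, ← Real.rpow_mul hy.le, hA]
    rw [show (1 - q) * y * (y ^ p * y ^ ((p+1)*(β-1)))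
        = (1 - q) * (y * y ^ p * y ^ ((p+1)*(β-1))) by ring, hy1]
    field_simp
  calc qNum q (p + 1) ^ (1 - β) / qGamma (q ^ (p+1)) β * ((1 - q) * y
        * (y ^ p * (y ^ (p+1)) ^ (β - 1)
          * ∑' (i : ℕ), Q ^ i * (qPochInf (Q * Q ^ i) Q / qPochInf (Q ^ β * Q ^ i) Q) * f (q ^ i * y)))
      = qNum q (p + 1) ^ (1 - β) / qGamma (q ^ (p+1)) β * ((1 - q) * y
        * (y ^ p * (y ^ (p+1)) ^ (β - 1)))
        * ∑' (i : ℕ), Q ^ i * (qPochInf (Q * Q ^ i) Q / qPochInf (Q ^ β * Q ^ i) Q) * f (q ^ i * y) := by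
        ring
    _ = _ := by rw [key]
end closed

section Rlem
variable {Q a : ℝ}

lemma arg_lt_one (hQ0 : 0 < Q) (hQ1 : Q < 1) (ha0 : 0 ≤ a) (ha1 : a < 1) (k : ℕ) :
    a * Q ^ k < 1 := by
  nlinarith [pow_le_one₀ hQ0.le hQ1.le (n := k), pow_pos hQ0 k]

lemma prod_facs_pos (hQ0 : 0 < Q) (hQ1 : Q < 1) (ha0 : 0 ≤ a) (ha1 : a < 1) (k : ℕ) :
    0 < ∏ r ∈ Finset.range k, (1 - a * Q ^ r) := by
  apply Finset.prod_pos
  intro r _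
  have := arg_lt_one hQ0 hQ1 ha0 ha1 r
  linarith

lemma prod_facs_le_one (hQ0 : 0 < Q) (hQ1 : Q < 1) (ha0 : 0 ≤ a) (ha1 : a < 1) (k : ℕ) :
    ∏ r ∈ Finset.range k, (1 - a * Q ^ r) ≤ 1 := by
  apply Finset.prod_le_one
  · intro r _
    have := arg_lt_one hQ0 hQ1 ha0 ha1 r
    linarith
  · intro r _
    nlinarith [arg_lt_one hQ0 hQ1 ha0 ha1 r, pow_pos hQ0 r]

lemma poch_shift_ge (hQ0 : 0 < Q) (hQ1 : Q < 1) (ha0 : 0 ≤ a) (ha1 : a < 1) (k : ℕ) :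
    qPochInf a Q ≤ qPochInf (a * Q ^ k) Q := by
  have h := qPochInf_finshift hQ0 hQ1 ha0 ha1 k
  have hpos : 0 < qPochInf (a * Q ^ k) Q :=
    qPochInf_pos hQ0 hQ1 (by positivity) (arg_lt_one hQ0 hQ1 ha0 ha1 k)
  nlinarith [prod_facs_le_one hQ0 hQ1 ha0 ha1 k, prod_facs_pos hQ0 hQ1 ha0 ha1 k]

lemma R_nonneg (hQ0 : 0 < Q) (hQ1 : Q < 1) (ha0 : 0 ≤ a) (ha1 : a < 1) (k : ℕ) :
    0 ≤ qPochInf (Q * Q ^ k) Q / qPochInf (a * Q ^ k) Q := by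
  have h1 : 0 < qPochInf (Q * Q ^ k) Q :=
    qPochInf_pos hQ0 hQ1 (by positivity) (arg_lt_one hQ0 hQ1 hQ0.le hQ1 k)
  have h2 : 0 < qPochInf (a * Q ^ k) Q :=
    qPochInf_pos hQ0 hQ1 (by positivity) (arg_lt_one hQ0 hQ1 ha0 ha1 k)
  positivity

lemma R_le (hQ0 : 0 < Q) (hQ1 : Q < 1) (ha0 : 0 ≤ a) (ha1 : a < 1) (k : ℕ) :
    qPochInf (Q * Q ^ k) Q / qPochInf (a * Q ^ k) Q ≤ (qPochInf a Q)⁻¹ := by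
  have h1 : qPochInf (Q * Q ^ k) Q ≤ 1 :=
    qPochInf_le_one hQ0 hQ1 (by positivity) (arg_lt_one hQ0 hQ1 hQ0.le hQ1 k)
  have h2 : 0 < qPochInf (a * Q ^ k) Q :=
    qPochInf_pos hQ0 hQ1 (by positivity) (arg_lt_one hQ0 hQ1 ha0 ha1 k)
  have h3 : 0 < qPochInf a Q := qPochInf_pos hQ0 hQ1 ha0 ha1
  have h4 := poch_shift_ge hQ0 hQ1 ha0 ha1 k
  rw [div_le_iff₀ h2, inv_mul_eq_div, div_eq_mul_inv]
  calc qPochInf (Q * Q ^ k) Q ≤ 1 := h1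
    _ ≤ qPochInf (a * Q ^ k) Q * (qPochInf a Q)⁻¹ := by
        rw [← div_eq_mul_inv, le_div_iff₀ h3]
        nlinarith
    _ = _ := by ring

lemma R_eq (hQ0 : 0 < Q) (hQ1 : Q < 1) (ha0 : 0 ≤ a) (ha1 : a < 1) (k : ℕ) :
    qPochInf (Q * Q ^ k) Q / qPochInf (a * Q ^ k) Q
      = (qPochInf Q Q / qPochInf a Q) * qRat Q a k := by
  have h1 := qPochInf_finshift hQ0 hQ1 hQ0.le hQ1 k
  have h2 := qPochInf_finshift hQ0 hQ1 ha0 ha1 k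
  have hP1 : 0 < ∏ r ∈ Finset.range k, (1 - Q * Q ^ r) := prod_facs_pos hQ0 hQ1 hQ0.le hQ1 k
  have hP2 : 0 < ∏ r ∈ Finset.range k, (1 - a * Q ^ r) := prod_facs_pos hQ0 hQ1 ha0 ha1 k
  have hN : 0 < qPochInf (Q * Q ^ k) Q :=
    qPochInf_pos hQ0 hQ1 (by positivity) (arg_lt_one hQ0 hQ1 hQ0.le hQ1 k)
  have hD : 0 < qPochInf (a * Q ^ k) Q :=
    qPochInf_pos hQ0 hQ1 (by positivity) (arg_lt_one hQ0 hQ1 ha0 ha1 k)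
  have hrat : qRat Q a k
      = (∏ r ∈ Finset.range k, (1 - a * Q ^ r)) / (∏ r ∈ Finset.range k, (1 - Q * Q ^ r)) := by
    rw [qRat, Finset.prod_div_distrib]
    congr 1
    apply Finset.prod_congr rfl
    intro r _
    rw [pow_succ']
  rw [hrat, h1, h2]
  field_simp
end Rlem

lemma Jfrac_comp (q p α x y : ℝ) (f : ℝ → ℝ) (C : ℝ)
    (hq0 : 0 < q) (hq1 : q < 1) (hp : -1 < p) (hα0 : 0 < α) (hα1 : α < 1) (hx : 0 < x)
    (hC : ∀ z ∈ Set.Ioc (0:ℝ) x, |f z| ≤ C) (hy0 : 0 < y) (hyx : y ≤ x) :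
    Jfrac q p (1 - α) (fun z => Jfrac q p α f z) y
      = (1 - q) * y ^ (p + 1) * ∑' n : ℕ, (q ^ (p+1)) ^ n * f (q ^ n * y) := by
  have hp1 : (0:ℝ) < p + 1 := by linarith
  set Q : ℝ := q ^ (p+1) with hQdef
  have hQ0 : 0 < Q := Real.rpow_pos_of_pos hq0 _
  have hQ1 : Q < 1 := Real.rpow_lt_one hq0.le hq1 hp1
  set s : ℝ := Q ^ α with hsdef
  set t : ℝ := Q ^ (1-α) with htdef
  have hs0 : 0 < s := Real.rpow_pos_of_pos hQ0 _
  have hs1 : s < 1 := Real.rpow_lt_one hQ0.le hQ1 hα0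
  have ht0 : 0 < t := Real.rpow_pos_of_pos hQ0 _
  have ht1 : t < 1 := Real.rpow_lt_one hQ0.le hQ1 (by linarith)
  have hts : t = Q / s := by
    rw [htdef, hsdef, Real.rpow_sub hQ0, Real.rpow_one]
  have hq1' : (0:ℝ) < 1 - q := by linarith
  have hPQ : 0 < qPochInf Q Q := qPochInf_pos hQ0 hQ1 hQ0.le hQ1
  have hPs : 0 < qPochInf s Q := qPochInf_pos hQ0 hQ1 hs0.le hs1
  have hPt : 0 < qPochInf t Q := qPochInf_pos hQ0 hQ1 ht0.le ht1
  have hC0 : 0 ≤ C := le_trans (abs_nonneg _) (hC x ⟨hx, le_refl x⟩)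
  -- abbreviations
  set Rt : ℕ → ℝ := fun j => qPochInf (Q * Q ^ j) Q / qPochInf (t * Q ^ j) Q with hRt
  set Rs : ℕ → ℝ := fun i => qPochInf (Q * Q ^ i) Q / qPochInf (s * Q ^ i) Q with hRs
  set Ks : ℝ := (1-q) ^ α * qPochInf s Q / qPochInf Q Q with hKs
  set Kt : ℝ := (1-q) ^ (1-α) * qPochInf t Q / qPochInf Q Q with hKt
  set Y : ℝ := y ^ ((p+1) * α) with hY
  set T : ℕ × ℕ → ℝ := fun c =>
    ((Q*s) ^ c.1 * Rt c.1) * ((Q ^ c.2 * Rs c.2) * f (q ^ (c.2 + c.1) * y)) with hT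
  -- summability of T
  have hTsum : Summable T := by
    rw [← summable_abs_iff]
    have hdom : Summable (fun c : ℕ × ℕ =>
        ((qPochInf t Q)⁻¹ * (Q*s) ^ c.1) * (((qPochInf s Q)⁻¹ * C) * Q ^ c.2)) := by
      have h1 : Summable (fun j : ℕ => ‖(qPochInf t Q)⁻¹ * (Q*s) ^ j‖) := by
        apply Summable.abs
        exact (summable_geometric_of_lt_one (by positivity) (by nlinarith)).mul_left _
      have h2 : Summable (fun i : ℕ => ‖((qPochInf s Q)⁻¹ * C) * Q ^ i‖) := by
        apply Summable.abs
        exact (summable_geometric_of_lt_one hQ0.le hQ1).mul_left _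
      exact summable_mul_of_summable_norm h1 h2
    apply Summable.of_nonneg_of_le (fun c => abs_nonneg _) _ hdom
    intro c
    have hb1 : 0 ≤ (Q*s) ^ c.1 := by positivity
    have hb2 : 0 ≤ Q ^ c.2 := by positivity
    have hRtn : 0 ≤ Rt c.1 := R_nonneg hQ0 hQ1 ht0.le ht1 c.1
    have hRsn : 0 ≤ Rs c.2 := R_nonneg hQ0 hQ1 hs0.le hs1 c.2
    have hfb : |f (q ^ (c.2 + c.1) * y)| ≤ C := by
      apply hC
      constructor
      · positivity
      · calc q ^ (c.2 + c.1) * y ≤ 1 * y := by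
              apply mul_le_mul_of_nonneg_right (pow_le_one₀ hq0.le hq1.le) hy0.le
          _ = y := one_mul y
          _ ≤ x := hyx
    rw [hT]
    calc |(Q*s) ^ c.1 * Rt c.1 * (Q ^ c.2 * Rs c.2 * f (q ^ (c.2 + c.1) * y))|
        = (Q*s) ^ c.1 * Rt c.1 * (Q ^ c.2 * Rs c.2) * |f (q ^ (c.2 + c.1) * y)| := by
          rw [abs_mul, abs_mul, abs_mul, abs_mul,
            abs_of_nonneg hb1, abs_of_nonneg hRtn, abs_of_nonneg hb2, abs_of_nonneg hRsn]
          ring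
      _ ≤ ((qPochInf t Q)⁻¹ * (Q*s) ^ c.1) * (((qPochInf s Q)⁻¹ * C) * Q ^ c.2) := by
          have e1 : Rt c.1 ≤ (qPochInf t Q)⁻¹ := R_le hQ0 hQ1 ht0.le ht1 c.1
          have e2 : Rs c.2 ≤ (qPochInf s Q)⁻¹ := R_le hQ0 hQ1 hs0.le hs1 c.2
          have := mul_le_mul (mul_le_mul (mul_le_mul (le_refl ((Q*s) ^ c.1)) e1 hRtn hb1)
            (mul_le_mul (le_refl (Q ^ c.2)) e2 hRsn hb2)
            (by positivity) (by positivity)) hfb (abs_nonneg _) (by positivity)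
          calc (Q*s) ^ c.1 * Rt c.1 * (Q ^ c.2 * Rs c.2) * |f (q ^ (c.2 + c.1) * y)|
              ≤ (Q*s) ^ c.1 * (qPochInf t Q)⁻¹ * (Q ^ c.2 * (qPochInf s Q)⁻¹) * C := this
            _ = ((qPochInf t Q)⁻¹ * (Q*s) ^ c.1) * (((qPochInf s Q)⁻¹ * C) * Q ^ c.2) := by ring
  -- expand outer Jfrac
  rw [Jfrac_closed (fun z => Jfrac q p α f z) hq0 hq1 hp hy0 (by linarith) (by linarith)]
  rw [← hQdef, ← htdef]
  -- termwise expansion of the inner Jfrac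
  have hterm : ∀ j : ℕ,
      (Q ^ j * (qPochInf (Q * Q ^ j) Q / qPochInf (t * Q ^ j) Q))
          * (fun z => Jfrac q p α f z) (q ^ j * y)
        = (Ks * Y) * ∑' i : ℕ, T (j, i) := by
    intro j
    simp only
    rw [Jfrac_closed f hq0 hq1 hp (by positivity) hα0 hα1, ← hQdef, ← hsdef]
    have e1 : (q ^ j * y) ^ ((p+1) * α) = s ^ j * Y := by
      rw [Real.mul_rpow (pow_pos hq0 j).le hy0.le, hY, pow_rpow_comm q ((p+1)*α) hq0 j]
      congr 2
      rw [hsdef, hQdef, ← Real.rpow_mul hq0.le]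
    have e2 : ∀ i : ℕ, (Q ^ i * (qPochInf (Q * Q ^ i) Q / qPochInf (s * Q ^ i) Q))
        * f (q ^ i * (q ^ j * y)) = (Q ^ i * Rs i) * f (q ^ (i + j) * y) := by
      intro i
      rw [hRs]
      congr 2
      rw [← mul_assoc, ← pow_add]
    rw [tsum_congr e2, e1]
    have : ∑' i : ℕ, T (j, i)
        = ((Q*s) ^ j * Rt j) * ∑' i : ℕ, (Q ^ i * Rs i) * f (q ^ (i + j) * y) := by
      rw [← tsum_mul_left]
    rw [this]
    simp only [hRt, hRs, hKs]
    rw [mul_pow]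
    ring
  rw [tsum_congr hterm, tsum_mul_left]
  -- double sum to single sum over antidiagonals
  have hswap : ∑' j : ℕ, ∑' i : ℕ, T (j, i) = ∑' n : ℕ, ∑ k ∈ Finset.range (n+1), T (k, n - k) := by
    rw [← Summable.tsum_prod' hTsum (fun j => hTsum.prod_factor j)]
    rw [← Finset.HasAntidiagonal.sigmaAntidiagonalEquivProd.tsum_eq T]
    have hsig := Summable.tsum_sigma'
      (f := fun c : (Σ n : ℕ, (Finset.HasAntidiagonal.antidiagonal n : Finset (ℕ × ℕ))) =>
        T (Finset.HasAntidiagonal.sigmaAntidiagonalEquivProd c))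
      (fun n => (hasSum_fintype _).summable)
      (Finset.HasAntidiagonal.sigmaAntidiagonalEquivProd.summable_iff.mpr hTsum)
    rw [hsig]
    apply tsum_congr
    intro n
    rw [tsum_fintype]
    have hcoe : ∀ c : (Finset.HasAntidiagonal.antidiagonal n : Finset (ℕ × ℕ)),
        T (Finset.HasAntidiagonal.sigmaAntidiagonalEquivProd ⟨n, c⟩) = T (c : ℕ × ℕ) := fun c => rfl
    rw [Finset.sum_congr rfl (fun c _ => hcoe c)]
    rw [Finset.sum_coe_sort (Finset.HasAntidiagonal.antidiagonal n) T]
    exact Finset.Nat.sum_antidiagonal_eq_sum_range_succ (fun k l => T (k, l)) n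
  rw [hswap]
  -- evaluate each antidiagonal sum via the Vandermonde identity
  have hdiag : ∀ n : ℕ, ∑ k ∈ Finset.range (n+1), T (k, n - k)
      = ((qPochInf Q Q / qPochInf t Q) * (qPochInf Q Q / qPochInf s Q))
        * (Q ^ n * f (q ^ n * y)) := by
    intro n
    have hsum : ∀ k ∈ Finset.range (n+1), T (k, n - k)
        = ((qPochInf Q Q / qPochInf t Q) * (qPochInf Q Q / qPochInf s Q))
          * (Q ^ n * f (q ^ n * y)) * (s ^ k * qRat Q (Q/s) k * qRat Q s (n - k)) := by
      intro k hk
      rw [Finset.mem_range] at hk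
      have hkn : k ≤ n := Nat.lt_succ_iff.mp hk
      simp only [hT]
      simp only [hRt, hRs]
      rw [R_eq hQ0 hQ1 ht0.le ht1 k, R_eq hQ0 hQ1 hs0.le hs1 (n - k)]
      have e3 : n - k + k = n := by omega
      rw [e3]
      have e4 : (Q*s) ^ k * Q ^ (n - k) = Q ^ n * s ^ k := by
        rw [mul_pow, mul_comm (Q ^ k), mul_assoc, ← pow_add]
        rw [show k + (n - k) = n by omega]
        ring
      rw [← hts]
      calc (Q*s) ^ k * (qPochInf Q Q / qPochInf t Q * qRat Q t k)
            * (Q ^ (n-k) * (qPochInf Q Q / qPochInf s Q * qRat Q s (n-k)) * f (q ^ n * y))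
          = ((Q*s) ^ k * Q ^ (n - k)) * (qPochInf Q Q / qPochInf t Q * qRat Q t k)
            * ((qPochInf Q Q / qPochInf s Q * qRat Q s (n-k)) * f (q ^ n * y)) := by ring
        _ = _ := by rw [e4]; ring
    rw [Finset.sum_congr rfl hsum, ← Finset.mul_sum, vand Q s hQ0 hQ1 hs0.ne' n, mul_one]
  rw [tsum_congr hdiag, tsum_mul_left]
  -- final constant bookkeeping
  have hYY : y ^ ((p+1) * (1-α)) * Y = y ^ (p+1) := by
    rw [hY, ← Real.rpow_add hy0]
    congr 1
    ring
  have hqq : (1-q) ^ (1-α) * (1-q) ^ α = 1 - q := by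
    rw [← Real.rpow_add hq1']
    norm_num
  calc (1-q) ^ (1-α) * qPochInf t Q / qPochInf Q Q * y ^ ((p+1) * (1-α))
        * (Ks * Y * ((qPochInf Q Q / qPochInf t Q) * (qPochInf Q Q / qPochInf s Q)
          * ∑' n : ℕ, Q ^ n * f (q ^ n * y)))
      = ((1-q) ^ (1-α) * (1-q) ^ α) * (y ^ ((p+1) * (1-α)) * Y)
        * ((qPochInf t Q / qPochInf t Q) * (qPochInf s Q / qPochInf s Q)
           * (qPochInf Q Q / qPochInf Q Q) * (qPochInf Q Q / qPochInf Q Q))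
        * ∑' n : ℕ, Q ^ n * f (q ^ n * y) := by rw [hKs]; ring
    _ = (1 - q) * y ^ (p+1) * ∑' n : ℕ, Q ^ n * f (q ^ n * y) := by
        rw [hqq, hYY, div_self hPt.ne', div_self hPs.ne', div_self hPQ.ne']
        ring

theorem Dfrac_left_inverse (q p α x : ℝ) (f : ℝ → ℝ)
    (hq0 : 0 < q) (hq1 : q < 1) (hp : -1 < p) (hα0 : 0 < α) (hα1 : α < 1) (hx : 0 < x)
    (hbd : ∃ C : ℝ, ∀ y ∈ Set.Ioc (0 : ℝ) x, |f y| ≤ C) :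
    Dfrac q p α (fun y => Jfrac q p α f y) x = f x := by
  obtain ⟨C, hC⟩ := hbd
  have hp1 : (0:ℝ) < p + 1 := by linarith
  have hq1' : (0:ℝ) < 1 - q := by linarith
  set Q : ℝ := q ^ (p+1) with hQdef
  have hQ0 : 0 < Q := Real.rpow_pos_of_pos hq0 _
  have hQ1 : Q < 1 := Real.rpow_lt_one hq0.le hq1 hp1
  have hC0 : 0 ≤ C := le_trans (abs_nonneg _) (hC x ⟨hx, le_refl x⟩)
  have hqx0 : 0 < q * x := by positivity
  have hqxx : q * x ≤ x := by nlinarith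
  unfold Dfrac qDeriv
  simp only
  rw [Jfrac_comp q p α x x f C hq0 hq1 hp hα0 hα1 hx hC hx le_rfl,
    Jfrac_comp q p α x (q*x) f C hq0 hq1 hp hα0 hα1 hx hC hqx0 hqxx, ← hQdef]
  -- summability of the series at x
  have hsum : Summable (fun n : ℕ => Q ^ n * f (q ^ n * x)) := by
    rw [← summable_abs_iff]
    refine Summable.of_nonneg_of_le (fun n => abs_nonneg _) ?_
      ((summable_geometric_of_lt_one hQ0.le hQ1).mul_left C)
    intro n
    rw [abs_mul, abs_of_nonneg (by positivity : (0:ℝ) ≤ Q ^ n)]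
    have hfb : |f (q ^ n * x)| ≤ C := by
      apply hC
      refine ⟨by positivity, ?_⟩
      calc q ^ n * x ≤ 1 * x := by
            apply mul_le_mul_of_nonneg_right (pow_le_one₀ hq0.le hq1.le) hx.le
        _ = x := one_mul x
    calc Q ^ n * |f (q ^ n * x)| ≤ Q ^ n * C := by
          apply mul_le_mul_of_nonneg_left hfb (by positivity)
      _ = C * Q ^ n := by ring
  -- rewrite the q*x series
  have e5 : (q*x) ^ (p+1) = Q * x ^ (p+1) := by
    rw [Real.mul_rpow hq0.le hx.le, hQdef]
  have e6 : (∑' n : ℕ, Q ^ n * f (q ^ n * (q * x)))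
      = ∑' n : ℕ, Q ^ n * f (q ^ (n+1) * x) := by
    apply tsum_congr
    intro n
    congr 2
    ring
  have e7 : Q * ∑' n : ℕ, Q ^ n * f (q ^ (n+1) * x)
      = ∑' n : ℕ, Q ^ (n+1) * f (q ^ (n+1) * x) := by
    rw [← tsum_mul_left]
    apply tsum_congr
    intro n
    rw [pow_succ']
    ring
  have e8 : (∑' n : ℕ, Q ^ n * f (q ^ n * x))
      = f x + ∑' n : ℕ, Q ^ (n+1) * f (q ^ (n+1) * x) := by
    rw [Summable.tsum_eq_zero_add hsum]
    simp
  rw [e6, e5]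
  rw [show (1 - q) * (Q * x ^ (p+1)) * ∑' n : ℕ, Q ^ n * f (q ^ (n+1) * x)
      = (1 - q) * x ^ (p+1) * (Q * ∑' n : ℕ, Q ^ n * f (q ^ (n+1) * x)) by ring, e7]
  rw [e8]
  have hxp : x ^ (-p) * x ^ p = 1 := by
    rw [← Real.rpow_add hx]
    norm_num
  have hxp1 : x ^ (p+1) = x ^ p * x := by
    rw [Real.rpow_add hx, Real.rpow_one]
  rw [hxp1]
  have hne : ((1:ℝ) - q) * x ≠ 0 := by positivity
  rw [show (1 - q) * (x ^ p * x) * (f x + ∑' (n : ℕ), Q ^ (n+1) * f (q ^ (n+1) * x))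
      - (1 - q) * (x ^ p * x) * ∑' (n : ℕ), Q ^ (n+1) * f (q ^ (n+1) * x)
      = ((1 - q) * x) * (x ^ p * f x) by ring]
  rw [mul_div_cancel_left₀ _ hne, ← mul_assoc, hxp, one_mul]
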